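/- Let h : ℝ^d → ℝ be continuously differentiable with L_h-Lipschitz continuous gradient and let σ : ℝ^d → (−∞,∞] be proper, lower semicontinuous with inf σ > −∞. Let t > 0, let v, w ∈ dom σ, and let u⁺ ∈ prox_t^σ(v − (1/t)∇h(w)). Then for every u ∈ dom σ and every s > 0, with g := h + σ, one has g(u⁺) ≤ g(u) + ((L_h + s)/2)‖u⁺ − u‖² + (t/2)‖u − v‖² − (t/2)‖u⁺ − v‖² + (L_h²/(2s))‖u − w‖². -/

import Mathlib

open scoped RealInnerProductSpace

lemma descent_aux {d : ℕ} (h : EuclideanSpace ℝ (Fin d) → ℝ) (Lh : ℝ)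
    (hcd : ContDiff ℝ 1 h)
    (hlip : ∀ x y : EuclideanSpace ℝ (Fin d),
      ‖gradient h x - gradient h y‖ ≤ Lh * ‖x - y‖)
    (x y : EuclideanSpace ℝ (Fin d)) :
    h y ≤ h x + ⟪gradient h x, y - x⟫ + Lh / 2 * ‖y - x‖ ^ 2 := by
  have hdiff : ∀ z, HasGradientAt h (gradient h z) z := fun z =>
    ((hcd.differentiable one_ne_zero) z).hasGradientAt
  set L : ℝ → EuclideanSpace ℝ (Fin d) := fun τ => x + τ • (y - x) with hL
  have hline : ∀ τ : ℝ, HasDerivAt L (y - x) τ := by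
    intro τ
    simpa [hL] using ((hasDerivAt_id τ).smul_const (y - x)).const_add x
  have hφ' : ∀ τ : ℝ, HasDerivAt (fun τ => h (L τ))
      ⟪gradient h (L τ), y - x⟫ τ := by
    intro τ
    have := (hdiff (L τ)).hasFDerivAt.comp_hasDerivAt τ (hline τ)
    simpa [InnerProductSpace.toDual_apply_apply, Function.comp_def] using this
  have hgradcont : Continuous (fun z => gradient h z) := by
    have : Continuous (fun z => fderiv ℝ h z) := hcd.continuous_fderiv one_ne_zero
    exact (InnerProductSpace.toDual ℝ (EuclideanSpace ℝ (Fin d))).symm.continuous.comp this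
  have hcont : Continuous (fun τ : ℝ => ⟪gradient h (L τ), y - x⟫) := by
    exact (hgradcont.comp (continuous_const.add (continuous_id.smul continuous_const) : Continuous L)).inner continuous_const
  have hint : ∫ τ in (0:ℝ)..1, ⟪gradient h (L τ), y - x⟫ = h (L 1) - h (L 0) :=
    intervalIntegral.integral_eq_sub_of_hasDerivAt
      (fun τ _ => hφ' τ) (hcont.intervalIntegrable 0 1)
  have hL0 : L 0 = x := by simp [hL]
  have hL1 : L 1 = y := by simp [hL]
  have hbound : ∀ τ ∈ Set.Icc (0:ℝ) 1,
      ⟪gradient h (L τ), y - x⟫ ≤ ⟪gradient h x, y - x⟫ + Lh * τ * ‖y - x‖ ^ 2 := by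
    intro τ hτ
    have h1 : ⟪gradient h (L τ) - gradient h x, y - x⟫
        ≤ ‖gradient h (L τ) - gradient h x‖ * ‖y - x‖ := real_inner_le_norm _ _
    have h2 : ‖gradient h (L τ) - gradient h x‖ ≤ Lh * (τ * ‖y - x‖) := by
      have := hlip (L τ) x
      have hLx : L τ - x = τ • (y - x) := by simp [hL]
      rw [hLx] at this
      rwa [norm_smul, Real.norm_eq_abs, abs_of_nonneg hτ.1] at this
    have h3 : ⟪gradient h (L τ) - gradient h x, y - x⟫ ≤ Lh * τ * ‖y - x‖ ^ 2 := by
      nlinarith [norm_nonneg (y - x), h1, h2,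
        mul_le_mul_of_nonneg_right h2 (norm_nonneg (y - x))]
    have := inner_sub_left (𝕜 := ℝ) (gradient h (L τ)) (gradient h x) (y - x)
    linarith [this ▸ h3]
  have hc2 : Continuous (fun τ : ℝ => Lh * τ * ‖y - x‖ ^ 2) := by fun_prop
  have hmono : ∫ τ in (0:ℝ)..1, ⟪gradient h (L τ), y - x⟫
      ≤ ∫ τ in (0:ℝ)..1, (⟪gradient h x, y - x⟫ + Lh * τ * ‖y - x‖ ^ 2) := by
    apply intervalIntegral.integral_mono_on (by norm_num)
      (hcont.intervalIntegrable 0 1)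
      ((continuous_const.add hc2).intervalIntegrable 0 1)
    exact hbound
  have hval : ∫ τ in (0:ℝ)..1, (⟪gradient h x, y - x⟫ + Lh * τ * ‖y - x‖ ^ 2)
      = ⟪gradient h x, y - x⟫ + Lh / 2 * ‖y - x‖ ^ 2 := by
    rw [intervalIntegral.integral_add (intervalIntegrable_const)
      (hc2.intervalIntegrable 0 1)]
    simp only [intervalIntegral.integral_const, smul_eq_mul]
    have : ∫ τ in (0:ℝ)..1, Lh * τ * ‖y - x‖ ^ 2
        = Lh * ‖y - x‖ ^ 2 * ∫ τ in (0:ℝ)..1, τ := by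
      rw [← intervalIntegral.integral_const_mul]
      congr 1; ext τ; ring
    rw [this, integral_id]
    ring
  rw [hint, hL0, hL1] at hmono
  rw [hval] at hmono
  linarith

/-- Proximal inequality, Lemma 3.3 of the paper.
Let `h : ℝ^d → ℝ` be continuously differentiable with `L_h`-Lipschitz gradient and let
`σ : ℝ^d → (−∞,∞]` be proper, lower semicontinuous and bounded below.  Let `t > 0`,
`v, w ∈ dom σ` and `u⁺ ∈ prox_t^σ (v − (1/t) ∇h(w))`.  Then for every `u ∈ dom σ` and
every `s > 0`, with `g := h + σ`,
`g(u⁺) ≤ g(u) + ((L_h+s)/2)‖u⁺−u‖² + (t/2)‖u−v‖² − (t/2)‖u⁺−v‖² + (L_h²/(2s))‖u−w‖²`. -/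
theorem stmt_0 {d : ℕ}
    (h : EuclideanSpace ℝ (Fin d) → ℝ) (Lh : ℝ) (hLh : 0 ≤ Lh)
    (hcd : ContDiff ℝ 1 h)
    (hlip : ∀ x y : EuclideanSpace ℝ (Fin d),
      ‖gradient h x - gradient h y‖ ≤ Lh * ‖x - y‖)
    (σ : EuclideanSpace ℝ (Fin d) → EReal)
    (hproper : ∃ x, σ x ≠ ⊤) (hnobot : ∀ x, σ x ≠ ⊥)
    (hlsc : LowerSemicontinuous σ)
    (hbdd : ∃ m : ℝ, ∀ x, (m : EReal) ≤ σ x)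
    (t : ℝ) (ht : 0 < t)
    (v w : EuclideanSpace ℝ (Fin d)) (hv : σ v ≠ ⊤) (hw : σ w ≠ ⊤)
    (uplus : EuclideanSpace ℝ (Fin d))
    (hprox : ∀ q : EuclideanSpace ℝ (Fin d),
      σ uplus + (((t / 2) * ‖uplus - (v - (1 / t) • gradient h w)‖ ^ 2 : ℝ) : EReal)
        ≤ σ q + (((t / 2) * ‖q - (v - (1 / t) • gradient h w)‖ ^ 2 : ℝ) : EReal))
    (u : EuclideanSpace ℝ (Fin d)) (hu : σ u ≠ ⊤) (s : ℝ) (hs : 0 < s) :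
    (h uplus : EReal) + σ uplus
      ≤ (h u : EReal) + σ u
        + ((((Lh + s) / 2) * ‖uplus - u‖ ^ 2 + (t / 2) * ‖u - v‖ ^ 2
            - (t / 2) * ‖uplus - v‖ ^ 2 + (Lh ^ 2 / (2 * s)) * ‖u - w‖ ^ 2 : ℝ) : EReal) := by
  set g : EuclideanSpace ℝ (Fin d) := gradient h w with hg
  set p : EuclideanSpace ℝ (Fin d) := v - (1 / t) • g with hp
  set a : ℝ := (σ u).toReal with ha'
  have ha : σ u = (a : EReal) := (EReal.coe_toReal hu (hnobot u)).symm
  have htop : σ uplus ≠ ⊤ := by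
    intro htopc
    have := hprox u
    rw [htopc, ha, EReal.top_add_of_ne_bot (by exact_mod_cast EReal.coe_ne_bot _)] at this
    have h2 : ((a : EReal) + ((t / 2) * ‖u - p‖ ^ 2 : ℝ)) < ⊤ := by
      rw [← EReal.coe_add]; exact EReal.coe_lt_top _
    exact absurd this (not_le.mpr h2)
  set b : ℝ := (σ uplus).toReal with hb'
  have hb : σ uplus = (b : EReal) := (EReal.coe_toReal htop (hnobot uplus)).symm
  have hkey : b + (t / 2) * ‖uplus - p‖ ^ 2 ≤ a + (t / 2) * ‖u - p‖ ^ 2 := by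
    have := hprox u
    rw [ha, hb, ← EReal.coe_add, ← EReal.coe_add, EReal.coe_le_coe_iff] at this
    exact this
  -- expansion of squared norms
  have hexp : ∀ q : EuclideanSpace ℝ (Fin d),
      ‖q - p‖ ^ 2 = ‖q - v‖ ^ 2 + (2 / t) * ⟪g, q - v⟫ + (1 / t) ^ 2 * ‖g‖ ^ 2 := by
    intro q
    have hqp : q - p = (q - v) + (1 / t) • g := by
      rw [hp]; abel
    rw [hqp, norm_add_sq_real, real_inner_smul_right, norm_smul]
    rw [real_inner_comm]
    have : ‖(1 / t)‖ = 1 / t := by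
      rw [Real.norm_eq_abs, abs_of_pos (by positivity)]
    rw [this]
    ring
  -- descent lemma
  have hdesc : h uplus ≤ h u + ⟪gradient h u, uplus - u⟫ + Lh / 2 * ‖uplus - u‖ ^ 2 :=
    descent_aux h Lh hcd hlip u uplus
  -- Cauchy-Schwarz + Young
  have hyoung : ⟪gradient h u - g, uplus - u⟫
      ≤ s / 2 * ‖uplus - u‖ ^ 2 + Lh ^ 2 / (2 * s) * ‖u - w‖ ^ 2 := by
    have h1 : ⟪gradient h u - g, uplus - u⟫ ≤ ‖gradient h u - g‖ * ‖uplus - u‖ :=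
      real_inner_le_norm _ _
    have h2 : ‖gradient h u - g‖ ≤ Lh * ‖u - w‖ := hlip u w
    have h3 : ‖gradient h u - g‖ * ‖uplus - u‖ ≤ Lh * ‖u - w‖ * ‖uplus - u‖ :=
      mul_le_mul_of_nonneg_right h2 (norm_nonneg _)
    have h4 : Lh * ‖u - w‖ * ‖uplus - u‖
        ≤ s / 2 * ‖uplus - u‖ ^ 2 + Lh ^ 2 / (2 * s) * ‖u - w‖ ^ 2 := by
      have hs' : s ≠ 0 := ne_of_gt hs
      have key : s / 2 * ‖uplus - u‖ ^ 2 + Lh ^ 2 / (2 * s) * ‖u - w‖ ^ 2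
          - Lh * ‖u - w‖ * ‖uplus - u‖
          = (s * ‖uplus - u‖ - Lh * ‖u - w‖) ^ 2 / (2 * s) := by
        field_simp
        ring
      have hnn : (0:ℝ) ≤ (s * ‖uplus - u‖ - Lh * ‖u - w‖) ^ 2 / (2 * s) :=
        div_nonneg (sq_nonneg _) (by positivity)
      linarith
    linarith
  have hinner : ⟪gradient h u, uplus - u⟫ = ⟪gradient h u - g, uplus - u⟫ + ⟪g, uplus - u⟫ := by
    rw [inner_sub_left]; ring
  -- from hkey, using expansions
  have hkey2 : b ≤ a + (t / 2) * ‖u - v‖ ^ 2 - (t / 2) * ‖uplus - v‖ ^ 2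
      + ⟪g, u - uplus⟫ := by
    have e1 := hexp u
    have e2 := hexp uplus
    set X : ℝ := ⟪g, u - v⟫ with hX
    set Y : ℝ := ⟪g, uplus - v⟫ with hY
    set Z : ℝ := ⟪g, u - uplus⟫ with hZ
    set G : ℝ := ‖g‖ ^ 2 with hG
    have hiuv : X - Y = Z := by
      rw [hX, hY, hZ, ← inner_sub_right]; congr 1; abel
    have ht' : t ≠ 0 := ne_of_gt ht
    have E1 : t / 2 * ‖u - p‖ ^ 2
        = t / 2 * ‖u - v‖ ^ 2 + X + t / 2 * ((1 / t) ^ 2 * G) := by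
      rw [e1]; field_simp
    have E2 : t / 2 * ‖uplus - p‖ ^ 2
        = t / 2 * ‖uplus - v‖ ^ 2 + Y + t / 2 * ((1 / t) ^ 2 * G) := by
      rw [e2]; field_simp
    linarith [hkey, E1, E2, hiuv]
  have hgul : ⟪g, u - uplus⟫ = - ⟪g, uplus - u⟫ := by
    rw [← inner_neg_right]; congr 1; abel
  -- final real inequality
  have hfinal : h uplus + b ≤ h u + a
      + (((Lh + s) / 2) * ‖uplus - u‖ ^ 2 + (t / 2) * ‖u - v‖ ^ 2
        - (t / 2) * ‖uplus - v‖ ^ 2 + (Lh ^ 2 / (2 * s)) * ‖u - w‖ ^ 2) := by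
    rw [hinner] at hdesc
    rw [hgul] at hkey2
    linarith
  rw [ha, hb]
  calc (h uplus : EReal) + (b : EReal) = ((h uplus + b : ℝ) : EReal) := by
        rw [EReal.coe_add]
    _ ≤ ((h u + a
      + (((Lh + s) / 2) * ‖uplus - u‖ ^ 2 + (t / 2) * ‖u - v‖ ^ 2
        - (t / 2) * ‖uplus - v‖ ^ 2 + (Lh ^ 2 / (2 * s)) * ‖u - w‖ ^ 2) : ℝ) : EReal) := by
        exact_mod_cast hfinal
    _ = _ := by rw [EReal.coe_add, EReal.coe_add]
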